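/- Density in a weighted space plus p-integrability of the weight implies L^p density: let X be a Polish space with finite Borel measure ν, ψ : X → (0,∞) measurable with ∫_X ψ^p dν < ∞ (p > 1), and let 𝒜 be a set of measurable functions such that for every continuous bounded f : X → ℝ and every δ > 0 there exists a ∈ 𝒜 with sup_{x∈X} |f(x) - a(x)|/ψ(x) < δ. Then for every f ∈ L^p(X, ν) and ε > 0 there exists a ∈ 𝒜 with ‖f - a‖_{L^p(X,ν)} < ε. -/

import Mathlib

open MeasureTheory
open scoped ENNReal NNReal

theorem stmt_11 {X : Type*} [TopologicalSpace X] [PolishSpace X]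
    [MeasurableSpace X] [BorelSpace X]
    (ν : Measure X) [IsFiniteMeasure ν]
    (ψ : X → ℝ) (hψmeas : Measurable ψ) (hψpos : ∀ x, 0 < ψ x)
    (p : ℝ) (hp : 1 < p)
    (hψint : ∫⁻ x, ENNReal.ofReal (ψ x ^ p) ∂ν ≠ ⊤)
    (𝒜 : Set (X → ℝ)) (h𝒜meas : ∀ a ∈ 𝒜, Measurable a)
    (hdense : ∀ f : X → ℝ, Continuous f → (∃ C : ℝ, ∀ x, |f x| ≤ C) →
      ∀ δ > (0:ℝ), ∃ a ∈ 𝒜, ∀ x, |f x - a x| < δ * ψ x) :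
    ∀ f : X → ℝ, MemLp f (ENNReal.ofReal p) ν → ∀ ε > (0:ℝ),
      ∃ a ∈ 𝒜, eLpNorm (fun x => f x - a x) (ENNReal.ofReal p) ν
        < ENNReal.ofReal ε := by
  intro f hf ε hε
  letI := TopologicalSpace.upgradeIsCompletelyMetrizable X
  set P := ENNReal.ofReal p with hP
  have hp0 : (0:ℝ) < p := lt_trans one_pos hp
  have hP0 : P ≠ 0 := by
    simp [hP, ENNReal.ofReal_eq_zero, not_le, hp0]
  have hPtop : P ≠ ⊤ := ENNReal.ofReal_ne_top
  have hP1 : 1 ≤ P := by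
    rw [hP, ← ENNReal.ofReal_one]
    exact ENNReal.ofReal_le_ofReal hp.le
  have hPto : P.toReal = p := ENNReal.toReal_ofReal hp0.le
  -- ψ has finite eLpNorm
  have hψLp : eLpNorm ψ P ν < ⊤ := by
    rw [eLpNorm_eq_lintegral_rpow_enorm_toReal hP0 hPtop, hPto]
    have : ∀ x, ‖ψ x‖ₑ ^ p = ENNReal.ofReal (ψ x ^ p) := by
      intro x
      rw [← ENNReal.ofReal_rpow_of_pos (hψpos x)]
      congr 1
      exact Real.enorm_eq_ofReal (hψpos x).le
    simp only [this]
    exact ENNReal.rpow_lt_top_of_nonneg (by positivity) hψint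
  set M := (eLpNorm ψ P ν).toReal
  -- Step 1: continuous bounded approximation
  obtain ⟨g, hg, hgmem⟩ := hf.exists_boundedContinuous_eLpNorm_sub_le hPtop
    (ε := ENNReal.ofReal (ε/3)) (by simp [ENNReal.ofReal_eq_zero, not_le]; linarith)
  -- Step 2: weighted approximation
  set δ := (ε/3) / (M + 1) with hδ
  have hM0 : 0 ≤ M := ENNReal.toReal_nonneg
  have hδ0 : 0 < δ := by positivity
  obtain ⟨a, ha𝒜, ha⟩ := hdense g g.continuous
    ⟨‖g‖, fun x => by simpa [Real.norm_eq_abs] using g.norm_coe_le_norm x⟩ δ hδ0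
  refine ⟨a, ha𝒜, ?_⟩
  have hgae : AEStronglyMeasurable (g : X → ℝ) ν := g.continuous.aestronglyMeasurable
  have haae : AEStronglyMeasurable a ν := (h𝒜meas a ha𝒜).aestronglyMeasurable
  have hga : eLpNorm (fun x => g x - a x) P ν ≤ ENNReal.ofReal δ * eLpNorm ψ P ν := by
    calc eLpNorm (fun x => g x - a x) P ν ≤ eLpNorm (fun x => δ * ψ x) P ν := by
          apply eLpNorm_mono
          intro x
          rw [Real.norm_eq_abs, Real.norm_eq_abs]
          have := (ha x).le
          have hδψ : 0 < δ * ψ x := mul_pos hδ0 (hψpos x)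
          rwa [abs_of_pos hδψ]
      _ = ENNReal.ofReal δ * eLpNorm ψ P ν := by
          have : (fun x => δ * ψ x) = δ • ψ := rfl
          rw [this, eLpNorm_const_smul]
          congr 1
          exact Real.enorm_eq_ofReal hδ0.le
  have hga' : eLpNorm (fun x => g x - a x) P ν < ENNReal.ofReal (ε/3) + ENNReal.ofReal (ε/3) := by
    refine lt_of_le_of_lt hga ?_
    have hM' : eLpNorm ψ P ν ≤ ENNReal.ofReal (M + 1) := by
      rw [← ENNReal.ofReal_toReal hψLp.ne]
      exact ENNReal.ofReal_le_ofReal (by linarith)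
    calc ENNReal.ofReal δ * eLpNorm ψ P ν ≤ ENNReal.ofReal δ * ENNReal.ofReal (M + 1) :=
          mul_le_mul_right hM' _
      _ = ENNReal.ofReal (δ * (M + 1)) := (ENNReal.ofReal_mul hδ0.le).symm
      _ = ENNReal.ofReal (ε/3) := by
          congr 1
          rw [hδ, div_mul_cancel₀ _ (ne_of_gt (by linarith))]
      _ < ENNReal.ofReal (ε/3) + ENNReal.ofReal (ε/3) := by
          exact ENNReal.lt_add_right (by simp) (ENNReal.ofReal_pos.mpr (by linarith)).ne'
  have key : eLpNorm (fun x => f x - a x) P ν ≤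
      eLpNorm (f - (g : X → ℝ)) P ν + eLpNorm (fun x => g x - a x) P ν := by
    have : (fun x => f x - a x) = (f - (g : X → ℝ)) + (fun x => g x - a x) := by
      funext x; simp only [Pi.add_apply, Pi.sub_apply]; ring
    rw [this]
    exact eLpNorm_add_le (hf.sub hgmem).aestronglyMeasurable (hgae.sub haae) hP1
  calc eLpNorm (fun x => f x - a x) P ν
      ≤ eLpNorm (f - (g : X → ℝ)) P ν + eLpNorm (fun x => g x - a x) P ν := key
    _ < ENNReal.ofReal (ε/3) + (ENNReal.ofReal (ε/3) + ENNReal.ofReal (ε/3)) :=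
        ENNReal.add_lt_add_of_le_of_lt (by
          exact ne_top_of_le_ne_top (by simp) hg) hg hga'
    _ = ENNReal.ofReal ε := by
        rw [← ENNReal.ofReal_add (by linarith) (by linarith),
          ← ENNReal.ofReal_add (by linarith) (by linarith)]
        congr 1
        ring
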